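/- Suppose f, g : S → ℝ are both SC1 (single crossing from below) functions on a totally ordered set S, and they satisfy signed-ratio monotonicity. Then every nonnegative linear combination αf + βg with α, β ≥ 0 is SC1. -/
import Mathlib


/-- Single crossing from below. -/
def SC1 {S : Type*} [LinearOrder S] (f : S → ℝ) : Prop :=
  ∀ s shat : S, s < shat → (0 ≤ f s → 0 ≤ f shat) ∧ (0 < f s → 0 < f shat)

/-- Signed-ratio monotonicity of Quah–Strulovici. -/
def SignedRatioMono {S : Type*} [LinearOrder S] (f g : S → ℝ) : Prop :=
  (∀ s shat : S, s < shat → g s < 0 → 0 < f s → -(g shat) / f shat ≤ -(g s) / f s) ∧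
  (∀ s shat : S, s < shat → f s < 0 → 0 < g s → -(f shat) / g shat ≤ -(f s) / g s)

lemma key (a b A B α β : ℝ) (ha : 0 < a) (hA : 0 < A) (hb : b < 0)
    (hr : -B / A ≤ -b / a) (hα : 0 ≤ α) (hβ : 0 ≤ β) :
    (0 ≤ α * a + β * b → 0 ≤ α * A + β * B) ∧
    (0 < α * a + β * b → 0 < α * A + β * B) := by
  have hr' : b * A ≤ B * a := by
    rw [div_le_div_iff₀ hA ha] at hr; nlinarith
  constructor
  · intro h
    have h1 : 0 ≤ (α * a + β * b) * A := by positivity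
    nlinarith [mul_nonneg hβ (sub_nonneg.mpr hr')]
  · intro h
    have h1 : 0 < (α * a + β * b) * A := by positivity
    nlinarith [mul_nonneg hβ (sub_nonneg.mpr hr')]

/-- Nonnegative linear combinations of SC1 functions satisfying signed-ratio
monotonicity are SC1 (Quah–Strulovici aggregation). -/
theorem stmt_2 {S : Type*} [LinearOrder S] (f g : S → ℝ)
    (hf : SC1 f) (hg : SC1 g) (hsr : SignedRatioMono f g)
    (α β : ℝ) (hα : 0 ≤ α) (hβ : 0 ≤ β) :
    SC1 (fun s => α * f s + β * g s) := by
  intro s t hst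
  obtain ⟨hf1, hf2⟩ := hf s t hst
  obtain ⟨hg1, hg2⟩ := hg s t hst
  simp only
  rcases le_or_gt 0 (f s) with hfs | hfs
  · rcases le_or_gt 0 (g s) with hgs | hgs
    · -- both nonneg
      have hft := hf1 hfs
      have hgt := hg1 hgs
      constructor
      · intro _; positivity
      · intro h
        have h' : 0 < α * f s ∨ 0 < β * g s := by
          by_contra hc; push_neg at hc; linarith [hc.1, hc.2]
        rcases h' with h1 | h1
        · rcases mul_pos_iff.mp h1 with ⟨hap, hfp⟩ | ⟨_, hfn⟩
          · have := mul_pos hap (hf2 hfp)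
            have := mul_nonneg hβ hgt
            linarith
          · linarith
        · rcases mul_pos_iff.mp h1 with ⟨hbp, hgp⟩ | ⟨_, hgn⟩
          · have := mul_pos hbp (hg2 hgp)
            have := mul_nonneg hα hft
            linarith
          · linarith
    · -- g s < 0
      rcases lt_or_eq_of_le hfs with hfs' | hfs'
      · have hft := hf2 hfs'
        have hr := hsr.1 s t hst hgs hfs'
        exact key (f s) (g s) (f t) (g t) α β hfs' hft hgs hr hα hβ
      · -- f s = 0, g s < 0: combo at s is β * g s ≤ 0
        constructor
        · intro h
          have hβ0 : β = 0 := by nlinarith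
          have : 0 ≤ α * f t := mul_nonneg hα (hf1 hfs)
          simpa [hβ0] using this
        · intro h
          exfalso; nlinarith
  · rcases le_or_gt 0 (g s) with hgs | hgs
    · rcases lt_or_eq_of_le hgs with hgs' | hgs'
      · have hgt := hg2 hgs'
        have hr := hsr.2 s t hst hfs hgs'
        have := key (g s) (f s) (g t) (f t) β α hgs' hgt hfs hr hβ hα
        constructor
        · intro h; linarith [this.1 (by linarith)]
        · intro h; linarith [this.2 (by linarith)]
      · constructor
        · intro h
          have hα0 : α = 0 := by nlinarith
          have : 0 ≤ β * g t := mul_nonneg hβ (hg1 hgs)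
          simpa [hα0] using this
        · intro h; exfalso; nlinarith
    · -- both negative
      constructor
      · intro h
        have hα0 : α = 0 := by nlinarith
        have hβ0 : β = 0 := by nlinarith
        simp [hα0, hβ0]
      · intro h; exfalso; nlinarith
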